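/- arXiv:2107.09382 — 3 statements merged into one kernel-verified Lean document; each statement's English description precedes it below -/
import Mathlib

section
/- Let Z = {z_1 < z_2 < ... < z_p} be the points selected by the greedy algorithm for terminal set R = Y in a connected convex bipartite graph G(X,Y) convex on X. Then for all k ≤ p, the subgraph of G induced on the closed neighborhood N[{z_1,...,z_k}] is connected. -/
/-- `S` is a Steiner set for terminal set `R` in `G`: the subgraph induced on `R ∪ S`
is connected. -/
def IsSteinerSet {V : Type*} (G : SimpleGraph V) (R S : Set V) : Prop :=
  (G.induce (R ∪ S)).Connected

/-- `S` is a minimum Steiner set for terminal set `R` in `G`. -/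
def IsMinSteinerSet {V : Type*} (G : SimpleGraph V) (R S : Set V) : Prop :=
  IsSteinerSet G R S ∧ ∀ S' : Set V, IsSteinerSet G R S' → S.ncard ≤ S'.ncard

/-- The bipartite graph on `α ⊕ β` determined by the cross-adjacency relation `A`. -/
def biGraph {α β : Type*} (A : α → β → Prop) : SimpleGraph (α ⊕ β) where
  Adj u v := (∃ a b, u = .inl a ∧ v = .inr b ∧ A a b) ∨ (∃ a b, u = .inr b ∧ v = .inl a ∧ A a b)
  symm := by
    constructor
    rintro u v (⟨a,b,h1,h2,h3⟩|⟨a,b,h1,h2,h3⟩)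
    · exact Or.inr ⟨a,b,h2,h1,h3⟩
    · exact Or.inl ⟨a,b,h2,h1,h3⟩
  loopless := by constructor; rintro (a|b) (⟨x,y,h1,h2,_⟩|⟨x,y,h1,h2,_⟩) <;> simp_all

/-- Spanning lemma: in a connected convex bipartite graph, for every `x` with `x+1 < m`
there is an interval containing both `x` and `x+1`. -/
lemma span_aux {m : ℕ} {Y : Type*} (A : Fin m → Y → Prop)
    (hconn : (biGraph A).Connected)
    (hconv : ∀ (y : Y) (a b c : Fin m), a ≤ b → b ≤ c → A a y → A c y → A b y)
    (x : Fin m) (hx : (x : ℕ) + 1 < m) :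
    ∃ b, A x b ∧ A ⟨(x : ℕ) + 1, hx⟩ b := by
  by_contra hno
  push_neg at hno
  set P : Fin m ⊕ Y → Prop :=
    Sum.elim (fun a => a ≤ x) (fun b => ∀ a, A a b → a ≤ x) with hP
  have hkey2 : ∀ (a : Fin m) (b : Y), A a b → (P (Sum.inl a) ↔ P (Sum.inr b)) := by
    intro a b hab
    simp only [hP, Sum.elim_inl, Sum.elim_inr]
    constructor
    · intro ha a' ha'
      by_contra hgt
      push_neg at hgt
      have h1 : A x b := hconv b a x a' ha hgt.le hab ha'
      have h2 : A ⟨(x : ℕ) + 1, hx⟩ b := by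
        refine hconv b a ⟨(x : ℕ) + 1, hx⟩ a' ?_ ?_ hab ha'
        · have := Fin.le_def.mp ha
          rw [Fin.le_def]
          simp only []
          omega
        · have := Fin.lt_def.mp hgt
          rw [Fin.le_def]
          simp only []
          omega
      exact hno b h1 h2
    · intro hb; exact hb a hab
  have hkey : ∀ u v, (biGraph A).Adj u v → (P u ↔ P v) := by
    rintro u v (⟨a, b, rfl, rfl, hab⟩ | ⟨a, b, rfl, rfl, hab⟩)
    · exact hkey2 a b hab
    · exact (hkey2 a b hab).symm
  have hwalk : ∀ u v, (biGraph A).Walk u v → (P u ↔ P v) := by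
    intro u v w
    induction w with
    | nil => exact Iff.rfl
    | cons h _ ih => exact (hkey _ _ h).trans ih
  obtain ⟨w⟩ := hconn.preconnected (Sum.inl x) (Sum.inl ⟨(x : ℕ) + 1, hx⟩)
  have hle := (hwalk _ _ w).mp (by simp [hP])
  simp only [hP, Sum.elim_inl] at hle
  have := Fin.le_def.mp hle
  simp only [] at this
  omega

/-- Consecutive selected points share a common interval. -/
lemma share_aux {m : ℕ} (hm : 1 ≤ m) {Y : Type*} (A : Fin m → Y → Prop)
    (hconn : (biGraph A).Connected)
    (hconv : ∀ (y : Y) (a b c : Fin m), a ≤ b → b ≤ c → A a y → A c y → A b y)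
    (r : Y → Fin m) (hr : ∀ y : Y, A (r y) y ∧ ∀ x : Fin m, A x y → x ≤ r y)
    {n : ℕ} (y : Fin n → Y) (hy : Function.Bijective y)
    (hsort : Monotone fun i => r (y i))
    (sel : Fin n → Prop)
    (hsel : ∀ i : Fin n, sel i ↔
      ((∀ j, j < i → sel j → ¬ A (r (y j)) (y i)) ∨
       ((∃ j, j < i ∧ sel j ∧ A (r (y j)) (y i)) ∧ r (y i) ≠ ⟨m - 1, Nat.sub_lt hm Nat.one_pos⟩ ∧
        ∀ c : Fin n, (∃ j, j < i ∧ sel j ∧ A (r (y j)) (y c)) →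
          ∀ (h : (i : ℕ) + 1 < n), ¬ A (r (y ⟨(i : ℕ) + 1, h⟩)) (y c))))
    (i j : Fin n) (hij : i < j) (hsi : sel i) (hsj : sel j)
    (hcons : ∀ k, i < k → k < j → ¬ sel k) :
    ∃ b, A (r (y i)) b ∧ A (r (y j)) b := by
  classical
  have hsort' : ∀ {a b : Fin n}, a ≤ b → r (y a) ≤ r (y b) := fun h => hsort h
  have hmono' : ∀ a b : Fin n, r (y a) < r (y b) → a < b := by
    intro a b hlt
    by_contra hba
    push_neg at hba
    exact absurd (hsort' hba) (not_le.mpr hlt)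
  by_cases hmk : ∃ j'', j'' < j ∧ sel j'' ∧ A (r (y j'')) (y j)
  · obtain ⟨j'', hj''j, hs'', hA''⟩ := hmk
    have hj''i : j'' ≤ i := by
      by_contra hlt
      push_neg at hlt
      exact hcons j'' hlt hj''j hs''
    exact ⟨y j, hconv (y j) (r (y j'')) (r (y i)) (r (y j)) (hsort' hj''i)
      (hsort' hij.le) hA'' (hr (y j)).1, (hr (y j)).1⟩
  · push_neg at hmk
    have hzz' : r (y i) < r (y j) := by
      rcases lt_or_eq_of_le (hsort' hij.le) with h | h
      · exact h
      · exact absurd (by rw [h]; exact (hr (y j)).1 : A (r (y i)) (y j)) (hmk i hij hsi)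
    have hx : (r (y i) : ℕ) + 1 < m := by
      have h1 := (r (y j)).isLt
      have h2 := Fin.lt_def.mp hzz'
      omega
    obtain ⟨b₀, hb₀, hb₀'⟩ := span_aux A hconn hconv (r (y i)) hx
    obtain ⟨c₁, hc₁⟩ := hy.2 b₀
    subst hc₁
    set Q : Finset (Fin n) :=
      Finset.filter (fun c => ∃ j', j' ≤ i ∧ sel j' ∧ A (r (y j')) (y c)) Finset.univ with hQ
    have hc₁Q : c₁ ∈ Q := by
      simp only [hQ, Finset.mem_filter, Finset.mem_univ, true_and]
      exact ⟨i, le_refl i, hsi, hb₀⟩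
    by_cases hbig : ∃ c ∈ Q, r (y j) ≤ r (y c)
    · obtain ⟨c, hcQ, hrc⟩ := hbig
      simp only [hQ, Finset.mem_filter, Finset.mem_univ, true_and] at hcQ
      obtain ⟨j', hj'i, hs', hA'⟩ := hcQ
      refine ⟨y c, ?_, ?_⟩
      · exact hconv (y c) (r (y j')) (r (y i)) (r (y c)) (hsort' hj'i)
          (le_trans hzz'.le hrc) hA' (hr (y c)).1
      · exact hconv (y c) (r (y j')) (r (y j)) (r (y c))
          (le_trans (hsort' hj'i) hzz'.le) hrc hA' (hr (y c)).1
    · exfalso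
      push_neg at hbig
      obtain ⟨c₀, hc₀Q, hc₀max⟩ : ∃ c₀, c₀ ∈ Q ∧ ∀ k ∈ Q, k ≤ c₀ :=
        ⟨Q.max' ⟨c₁, hc₁Q⟩, Q.max'_mem ⟨c₁, hc₁Q⟩, fun k hk => Q.le_max' k hk⟩
      have hc₀Q' := hc₀Q
      simp only [hQ, Finset.mem_filter, Finset.mem_univ, true_and] at hc₀Q'
      obtain ⟨j', hj'i, hs', hA'⟩ := hc₀Q'
      have hrc₁ : (r (y i) : ℕ) + 1 ≤ (r (y c₁) : ℕ) := Fin.le_def.mp ((hr (y c₁)).2 _ hb₀')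
      have hc₁c₀ : c₁ ≤ c₀ := hc₀max _ hc₁Q
      have hzc₀ : r (y i) < r (y c₀) := by
        have h1 := Fin.le_def.mp (hsort' hc₁c₀)
        rw [Fin.lt_def]
        omega
      have hic₀ : i < c₀ := hmono' _ _ hzc₀
      have hc₀j : c₀ < j := hmono' _ _ (hbig c₀ hc₀Q)
      have hnsel : ¬ sel c₀ := hcons c₀ hic₀ hc₀j
      rw [hsel] at hnsel
      push_neg at hnsel
      obtain ⟨-, hnsel2⟩ := hnsel
      have hC1 : ∃ j₂, j₂ < c₀ ∧ sel j₂ ∧ A (r (y j₂)) (y c₀) :=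
        ⟨j', lt_of_le_of_lt hj'i hic₀, hs', hA'⟩
      have hC2 : r (y c₀) ≠ ⟨m - 1, Nat.sub_lt hm Nat.one_pos⟩ := by
        intro he
        have h1 := Fin.lt_def.mp (hbig c₀ hc₀Q)
        have h2 := (r (y j)).isLt
        have h3 : (r (y c₀) : ℕ) = m - 1 := by rw [he]
        omega
      obtain ⟨c', ⟨j₂, hj₂, hs₂, hA₂⟩, h, hAe⟩ := hnsel2 hC1 hC2
      have hj₂i : j₂ ≤ i := by
        by_contra hh
        push_neg at hh
        exact hcons j₂ hh (lt_trans hj₂ hc₀j) hs₂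
      have hc'Q : c' ∈ Q := by
        simp only [hQ, Finset.mem_filter, Finset.mem_univ, true_and]
        exact ⟨j₂, hj₂i, hs₂, hA₂⟩
      have hre : r (y ⟨(c₀ : ℕ) + 1, h⟩) ≤ r (y c') := (hr (y c')).2 _ hAe
      have hrej : r (y ⟨(c₀ : ℕ) + 1, h⟩) < r (y j) := lt_of_le_of_lt hre (hbig c' hc'Q)
      have hej : (⟨(c₀ : ℕ) + 1, h⟩ : Fin n) < j := hmono' _ _ hrej
      have hie : i < (⟨(c₀ : ℕ) + 1, h⟩ : Fin n) :=
        lt_trans hic₀ (by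
          rw [Fin.lt_def]
          have hval : ((⟨(c₀ : ℕ) + 1, h⟩ : Fin n) : ℕ) = (c₀ : ℕ) + 1 := rfl
          omega)
      apply hcons _ hie hej
      rw [hsel]
      left
      intro j₃ hj₃ hs₃ hA₃
      have hj₃i : j₃ ≤ i := by
        by_contra hh
        push_neg at hh
        exact hcons j₃ hh (lt_trans hj₃ hej) hs₃
      have heQ : (⟨(c₀ : ℕ) + 1, h⟩ : Fin n) ∈ Q := by
        simp only [hQ, Finset.mem_filter, Finset.mem_univ, true_and]
        exact ⟨j₃, hj₃i, hs₃, hA₃⟩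
      have hle := Fin.le_def.mp (hc₀max _ heQ)
      have hval : ((⟨(c₀ : ℕ) + 1, h⟩ : Fin n) : ℕ) = (c₀ : ℕ) + 1 := rfl
      omega

/-- For `R = Y` in a connected convex bipartite graph, the greedy algorithm (process the
intervals `y 0, …, y (n-1)` by nondecreasing right endpoints `r`, selecting `r (y i)`
when interval `i` is unmarked, or when it is marked, `r (y i) ≠ x_m` and no marked
interval contains `r (y (i+1))`; marking all intervals hit by a selected point) selects
points `z_1 < … < z_p` such that for every prefix `{z_1, …, z_k}`, the subgraph induced
on the closed neighborhood `N[{z_1, …, z_k}]` is connected. -/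
theorem stmt11 {m : ℕ} (hm : 1 ≤ m) {Y : Type*} [Fintype Y] (A : Fin m → Y → Prop)
    (hconn : (biGraph A).Connected)
    (hconv : ∀ (y : Y) (a b c : Fin m), a ≤ b → b ≤ c → A a y → A c y → A b y)
    (r : Y → Fin m) (hr : ∀ y : Y, A (r y) y ∧ ∀ x : Fin m, A x y → x ≤ r y)
    {n : ℕ} (y : Fin n → Y) (hy : Function.Bijective y)
    (hsort : Monotone fun i => r (y i))
    (sel : Fin n → Prop)
    (hsel : ∀ i : Fin n, sel i ↔
      ((∀ j, j < i → sel j → ¬ A (r (y j)) (y i)) ∨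
       ((∃ j, j < i ∧ sel j ∧ A (r (y j)) (y i)) ∧ r (y i) ≠ ⟨m - 1, by omega⟩ ∧
        ∀ c : Fin n, (∃ j, j < i ∧ sel j ∧ A (r (y j)) (y c)) →
          ∀ (h : (i : ℕ) + 1 < n), ¬ A (r (y ⟨(i : ℕ) + 1, h⟩)) (y c)))) :
    ∀ t : Fin n,
      ((biGraph A).induce
        ({v | ∃ i, i ≤ t ∧ sel i ∧ v = Sum.inl (r (y i))} ∪
         {v | ∃ u ∈ {v' | ∃ i, i ≤ t ∧ sel i ∧ v' = Sum.inl (r (y i))},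
            (biGraph A).Adj u v})).Connected := by
  intro t
  classical
  have hn : 0 < n := t.pos
  have sel0 : sel ⟨0, hn⟩ := by
    rw [hsel]
    left
    intro j hj _
    exact absurd (Fin.lt_def.mp hj) (Nat.not_lt_zero _)
  set Z : Set (Fin m ⊕ Y) := {v | ∃ i, i ≤ t ∧ sel i ∧ v = Sum.inl (r (y i))} with hZ
  set S : Set (Fin m ⊕ Y) := Z ∪ {v | ∃ u ∈ Z, (biGraph A).Adj u v} with hS
  have hmemZ : ∀ i : Fin n, i ≤ t → sel i → Sum.inl (r (y i)) ∈ Z :=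
    fun i hit hsi => ⟨i, hit, hsi, rfl⟩
  have hmemS : ∀ i : Fin n, i ≤ t → sel i → Sum.inl (r (y i)) ∈ S :=
    fun i hit hsi => Set.mem_union_left _ (hmemZ i hit hsi)
  have h0t : (⟨0, hn⟩ : Fin n) ≤ t := Fin.le_def.mpr (Nat.zero_le _)
  have hv₀ : Sum.inl (r (y ⟨0, hn⟩)) ∈ S := hmemS _ h0t sel0
  have key : ∀ (N : ℕ) (i : Fin n), (i : ℕ) < N → ∀ (hit : i ≤ t) (hsi : sel i),
      ((biGraph A).induce S).Reachable ⟨Sum.inl (r (y i)), hmemS i hit hsi⟩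
        ⟨Sum.inl (r (y ⟨0, hn⟩)), hv₀⟩ := by
    intro N
    induction N with
    | zero => exact fun i hiN => absurd hiN (Nat.not_lt_zero _)
    | succ N ih =>
      intro i hiN hit hsi
      rcases Nat.eq_zero_or_pos (i : ℕ) with h0 | h0
      · have hi0 : i = ⟨0, hn⟩ := Fin.ext h0
        have he : (⟨Sum.inl (r (y i)), hmemS i hit hsi⟩ : ↥S)
            = ⟨Sum.inl (r (y ⟨0, hn⟩)), hv₀⟩ :=
          Subtype.ext (by show Sum.inl (r (y i)) = _; rw [hi0])
        rw [he]
      · -- find the previous selected index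
        set Q' : Finset (Fin n) := Finset.filter (fun j => j < i ∧ sel j) Finset.univ with hQ'
        have h0i : (⟨0, hn⟩ : Fin n) < i := Fin.lt_def.mpr h0
        have hQne : Q'.Nonempty := ⟨⟨0, hn⟩, by
          simp only [hQ', Finset.mem_filter, Finset.mem_univ, true_and]
          exact ⟨h0i, sel0⟩⟩
        obtain ⟨i', hi'mem, hi'max⟩ : ∃ i', i' ∈ Q' ∧ ∀ k ∈ Q', k ≤ i' :=
          ⟨Q'.max' hQne, Q'.max'_mem hQne, fun k hk => Q'.le_max' k hk⟩
        simp only [hQ', Finset.mem_filter, Finset.mem_univ, true_and] at hi'mem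
        obtain ⟨hi'i, hsi'⟩ := hi'mem
        have hcons : ∀ k, i' < k → k < i → ¬ sel k := by
          intro k h1 h2 hs
          have : k ≤ i' := hi'max k (by
            simp only [hQ', Finset.mem_filter, Finset.mem_univ, true_and]
            exact ⟨h2, hs⟩)
          exact absurd this (not_le.mpr h1)
        obtain ⟨b, hb1, hb2⟩ := share_aux hm A hconn hconv r hr y hy hsort sel hsel
          i' i hi'i hsi' hsi hcons
        have hi't : i' ≤ t := le_trans hi'i.le hit
        have mz' : Sum.inl (r (y i')) ∈ S := hmemS i' hi't hsi'
        have hadj1 : (biGraph A).Adj (Sum.inl (r (y i'))) (Sum.inr b) :=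
          Or.inl ⟨_, _, rfl, rfl, hb1⟩
        have hadj2 : (biGraph A).Adj (Sum.inl (r (y i))) (Sum.inr b) :=
          Or.inl ⟨_, _, rfl, rfl, hb2⟩
        have mb : Sum.inr b ∈ S :=
          Set.mem_union_right _ ⟨Sum.inl (r (y i')), hmemZ i' hi't hsi', hadj1⟩
        have e1 : ((biGraph A).induce S).Adj ⟨Sum.inl (r (y i)), hmemS i hit hsi⟩
            ⟨Sum.inr b, mb⟩ := hadj2
        have e2 : ((biGraph A).induce S).Adj ⟨Sum.inr b, mb⟩
            ⟨Sum.inl (r (y i')), mz'⟩ := hadj1.symm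
        have hIH := ih i' (by
          have := Fin.lt_def.mp hi'i
          omega) hi't hsi'
        exact (e1.reachable).trans ((e2.reachable).trans hIH)
  have reach : ∀ w : ↥S, ((biGraph A).induce S).Reachable w
      ⟨Sum.inl (r (y ⟨0, hn⟩)), hv₀⟩ := by
    rintro ⟨w, hw | hw⟩
    · obtain ⟨i, hit, hsi, rfl⟩ := hw
      exact key ((i : ℕ) + 1) i (Nat.lt_succ_self _) hit hsi
    · obtain ⟨u, ⟨i, hit, hsi, rfl⟩, hadj⟩ := hw
      have mw : w ∈ S := Set.mem_union_right _ ⟨_, hmemZ i hit hsi, hadj⟩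
      have e : ((biGraph A).induce S).Adj ⟨w, mw⟩
          ⟨Sum.inl (r (y i)), hmemS i hit hsi⟩ := hadj.symm
      exact e.reachable.trans (key ((i : ℕ) + 1) i (Nat.lt_succ_self _) hit hsi)
  rw [SimpleGraph.connected_iff]
  exact ⟨fun u v => (reach u).trans (reach v).symm, ⟨⟨Sum.inl (r (y ⟨0, hn⟩)), hv₀⟩⟩⟩
end

section
/- Reduction correctness (forward direction): let G be a graph with edges e_1,...,e_m and let G* be the reduction graph with vertices V_1 ∪ V_2 ∪ V_3 as in the vertex-cover-to-STREE construction. If V' ⊆ V(G) is a vertex cover of G with |V'| = k, then S = {x_i : v_i ∈ V'} is a Steiner set of size k in G* for the terminal set R = {y_{i1}, y_{i2} : 1 ≤ i ≤ m} ∪ {z_{11}}, i.e., G*[R ∪ S] is connected. -/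
/-- Forward direction of the vertex-cover-to-STREE reduction: if `V'` is a vertex cover
of `G`, then `S = {x_i : v_i ∈ V'}` is a Steiner set of the same size in `G*` for the
terminal set `R = {y_{j1}, y_{j2} : 1 ≤ j ≤ m} ∪ {z_{11}}`. -/
theorem stmt15 {n m : ℕ} (hm : 0 < m) (G : SimpleGraph (Fin n))
    (a b : Fin m → Fin n) (hedges : ∀ j, G.Adj (a j) (b j))
    (hall : ∀ v w : Fin n, G.Adj v w → ∃ j, (a j = v ∧ b j = w) ∨ (a j = w ∧ b j = v))
    (V' : Set (Fin n)) (hVC : ∀ v w : Fin n, G.Adj v w → v ∈ V' ∨ w ∈ V') :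
    IsSteinerSet
      (biGraph (fun (i : Fin n) (x : (Fin m × Fin 2) ⊕ (Fin m × Fin 2)) =>
        Sum.elim (fun jt => a jt.1 = i ∨ b jt.1 = i) (fun _ => True) x))
      ({v | ∃ jt : Fin m × Fin 2, v = Sum.inr (Sum.inl jt)} ∪
       {Sum.inr (Sum.inr (⟨0, hm⟩, 0))})
      (Sum.inl '' V') ∧
    (Sum.inl '' V' : Set (Fin n ⊕ ((Fin m × Fin 2) ⊕ (Fin m × Fin 2)))).ncard = V'.ncard := by
  set A : Fin n → ((Fin m × Fin 2) ⊕ (Fin m × Fin 2)) → Prop :=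
    fun i x => Sum.elim (fun jt => a jt.1 = i ∨ b jt.1 = i) (fun _ => True) x with hA
  set W : Set (Fin n ⊕ ((Fin m × Fin 2) ⊕ (Fin m × Fin 2))) :=
    ({v | ∃ jt : Fin m × Fin 2, v = Sum.inr (Sum.inl jt)} ∪
     {Sum.inr (Sum.inr (⟨0, hm⟩, 0))}) ∪ (Sum.inl '' V') with hW
  refine ⟨?_, Set.ncard_image_of_injective _ Sum.inl_injective⟩
  rw [IsSteinerSet]
  have hz : (Sum.inr (Sum.inr (⟨0, hm⟩, 0)) : Fin n ⊕ ((Fin m × Fin 2) ⊕ (Fin m × Fin 2))) ∈ W :=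
    Or.inl (Or.inr rfl)
  set z : ↑W := ⟨_, hz⟩ with hzdef
  rw [SimpleGraph.connected_iff]
  refine ⟨?_, ⟨z⟩⟩
  have key : ∀ u : ↑W, ((biGraph A).induce W).Reachable u z := by
    rintro ⟨u, hu⟩
    have hx : ∀ (i : Fin n) (hi : Sum.inl i ∈ W),
        ((biGraph A).induce W).Reachable ⟨Sum.inl i, hi⟩ z := by
      intro i hi
      exact SimpleGraph.Adj.reachable (Or.inl ⟨i, _, rfl, rfl, trivial⟩)
    rcases hu with (⟨jt, rfl⟩ | hu) | ⟨i, hi, rfl⟩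
    · rcases hVC _ _ (hedges jt.1) with h | h
      · refine (SimpleGraph.Adj.reachable ?_).trans (hx (a jt.1) (Or.inr ⟨_, h, rfl⟩))
        exact Or.inr ⟨a jt.1, _, rfl, rfl, Or.inl rfl⟩
      · refine (SimpleGraph.Adj.reachable ?_).trans (hx (b jt.1) (Or.inr ⟨_, h, rfl⟩))
        exact Or.inr ⟨b jt.1, _, rfl, rfl, Or.inr rfl⟩
    · simp only [Set.mem_singleton_iff] at hu
      subst hu; exact SimpleGraph.Reachable.refl _
    · exact hx i _
  intro u v
  exact (key u).trans (key v).symm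
end

section
/- Reduction correctness (reverse direction): with G* and R as in the vertex-cover reduction, if S ⊆ V(G*) with S ⊆ V_1 is a Steiner set of size k for R = {y_{i1}, y_{i2} : 1 ≤ i ≤ m} ∪ {z_{11}}, then V' = {v_i : x_i ∈ S} is a vertex cover of G of size at most k. -/
/-- Reverse direction of the vertex-cover-to-STREE reduction: if `S ⊆ V₁` is a Steiner
set for `R = {y_{j1}, y_{j2} : 1 ≤ j ≤ m} ∪ {z_{11}}` in `G*`, then the corresponding
vertices form a vertex cover of `G` of size at most `|S|`. -/
theorem stmt16 {n m : ℕ} (hm : 0 < m) (G : SimpleGraph (Fin n))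
    (a b : Fin m → Fin n) (hedges : ∀ j, G.Adj (a j) (b j))
    (hall : ∀ v w : Fin n, G.Adj v w → ∃ j, (a j = v ∧ b j = w) ∨ (a j = w ∧ b j = v))
    (S : Set (Fin n))
    (hS : IsSteinerSet
      (biGraph (fun (i : Fin n) (x : (Fin m × Fin 2) ⊕ (Fin m × Fin 2)) =>
        Sum.elim (fun jt => a jt.1 = i ∨ b jt.1 = i) (fun _ => True) x))
      ({v | ∃ jt : Fin m × Fin 2, v = Sum.inr (Sum.inl jt)} ∪
       {Sum.inr (Sum.inr (⟨0, hm⟩, 0))})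
      (Sum.inl '' S)) :
    (∀ v w : Fin n, G.Adj v w → v ∈ S ∨ w ∈ S) ∧
    S.ncard ≤ (Sum.inl '' S : Set (Fin n ⊕ ((Fin m × Fin 2) ⊕ (Fin m × Fin 2)))).ncard := by
  constructor
  · intro v w hvw
    obtain ⟨j, hj⟩ := hall v w hvw
    suffices h : a j ∈ S ∨ b j ∈ S by
      rcases hj with ⟨h1, h2⟩ | ⟨h1, h2⟩ <;> subst h1 <;> subst h2 <;> tauto
    have hu : (Sum.inr (Sum.inl (j, 0)) : Fin n ⊕ ((Fin m × Fin 2) ⊕ (Fin m × Fin 2))) ∈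
        (({v | ∃ jt : Fin m × Fin 2, v = Sum.inr (Sum.inl jt)} ∪
          {Sum.inr (Sum.inr (⟨0, hm⟩, 0))}) ∪ Sum.inl '' S) := Or.inl (Or.inl ⟨(j, 0), rfl⟩)
    have hw : (Sum.inr (Sum.inr (⟨0, hm⟩, 0)) : Fin n ⊕ ((Fin m × Fin 2) ⊕ (Fin m × Fin 2))) ∈
        (({v | ∃ jt : Fin m × Fin 2, v = Sum.inr (Sum.inl jt)} ∪
          {Sum.inr (Sum.inr (⟨0, hm⟩, 0))}) ∪ Sum.inl '' S) := Or.inl (Or.inr rfl)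
    obtain ⟨p⟩ := hS.preconnected ⟨_, hu⟩ ⟨_, hw⟩
    cases p with
    | cons hadj p =>
      rename_i v'
      obtain ⟨i, c, h1, h2, h3⟩ | ⟨i, c, h1, h2, h3⟩ := hadj
      · exact absurd h1 (by simp)
      · have hb : c = Sum.inl (j, 0) := by
          have h1' : (Sum.inr (Sum.inl (j, 0)) : Fin n ⊕ ((Fin m × Fin 2) ⊕ (Fin m × Fin 2))) =
              Sum.inr c := h1
          exact (Sum.inr_injective h1').symm
        subst hb
        have hv : (v' : Fin n ⊕ ((Fin m × Fin 2) ⊕ (Fin m × Fin 2))) = Sum.inl i := h2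
        have hmem := v'.2
        rw [hv] at hmem
        rcases hmem with (⟨jt, hjt⟩ | hjt) | ⟨x, hx, hxi⟩
        · exact absurd hjt (by simp)
        · exact absurd hjt (by simp)
        · have : x = i := Sum.inl.injEq x i ▸ (by injection hxi)
          subst this
          rcases h3 with h3 | h3
          · exact Or.inl (h3 ▸ hx)
          · exact Or.inr (h3 ▸ hx)
  · exact (Set.ncard_image_of_injective S Sum.inl_injective).ge
end
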